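/- Let f(t) = a_0 + a_1 t + ⋯ + a_M t^M be a polynomial with complex coefficients. Then for every positive integer n and every complex number λ with λ ∉ {0, 1, 2, ..., n}, one has ∑_{k=0}^{n} C(n,k) (-1)^k f(k)/(k-λ) = f(λ) · ∑_{k=0}^{n} C(n,k) (-1)^k/(k-λ) + (-1)^n n! · ∑_{m=n+1}^{M} a_m ( ∑_{j=0}^{m-1} λ^j S(m-j-1, n) ), where the last sum is empty (equal to zero) when M ≤ n. -/

import Mathlib

open Finset Nat

/-- Stirling numbers of the second kind. -/
def stirling2 : ℕ → ℕ → ℕ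
  | 0, 0 => 1
  | 0, _ + 1 => 0
  | _ + 1, 0 => 0
  | p + 1, k + 1 => (k + 1) * stirling2 p (k + 1) + stirling2 p k

lemma stirling2_eq_zero : ∀ {p k : ℕ}, p < k → stirling2 p k = 0
  | 0, 0, h => by omega
  | 0, _ + 1, _ => rfl
  | _ + 1, 0, h => by omega
  | p + 1, k + 1, h => by
      show (k + 1) * stirling2 p (k + 1) + stirling2 p k = 0
      rw [stirling2_eq_zero (by omega), stirling2_eq_zero (by omega)]
      ring

lemma k_mul_choose (k j : ℕ) :
    k * k.choose j = (j + 1) * k.choose (j + 1) + j * k.choose j := by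
  rcases le_or_gt j k with h | h
  · obtain ⟨d, rfl⟩ := Nat.exists_eq_add_of_le h
    have h1 := Nat.choose_succ_right_eq (j + d) j
    rw [Nat.add_sub_cancel_left] at h1
    nlinarith [h1]
  · rw [Nat.choose_eq_zero_of_lt h, Nat.choose_eq_zero_of_lt (by omega)]
    ring

lemma pow_eq_sum_stirling (k p : ℕ) :
    k ^ p = ∑ j ∈ Finset.range (p + 1), stirling2 p j * j ! * k.choose j := by
  induction p with
  | zero => simp [stirling2]
  | succ p ih =>
    rw [pow_succ, ih, Finset.sum_mul]
    have lhs_eq : ∀ j ∈ Finset.range (p + 1),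
        stirling2 p j * j ! * k.choose j * k
          = stirling2 p j * (j + 1)! * k.choose (j + 1)
            + j * stirling2 p j * j ! * k.choose j := by
      intro j _
      rw [mul_assoc, mul_comm (k.choose j) k, k_mul_choose, Nat.factorial_succ]
      ring
    rw [Finset.sum_congr rfl lhs_eq, Finset.sum_add_distrib]
    -- second sum: shift index
    have h2 : ∑ j ∈ Finset.range (p + 1), j * stirling2 p j * j ! * k.choose j
        = ∑ j ∈ Finset.range (p + 1), (j + 1) * stirling2 p (j + 1) * (j + 1)! * k.choose (j + 1) := by
      rw [Finset.sum_range_succ' (fun j => j * stirling2 p j * j ! * k.choose j) p]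
      rw [Finset.sum_range_succ]
      rw [stirling2_eq_zero (Nat.lt_succ_self p)]
      simp
    rw [h2, Finset.sum_range_succ' (fun j => stirling2 (p + 1) j * j ! * k.choose j) (p + 1)]
    have h0 : stirling2 (p + 1) 0 = 0 := rfl
    rw [h0, ← Finset.sum_add_distrib]
    simp only [zero_mul, add_zero]
    refine Finset.sum_congr rfl fun j _ => ?_
    show _ = stirling2 (p + 1) (j + 1) * (j + 1)! * k.choose (j + 1)
    have : stirling2 (p + 1) (j + 1) = (j + 1) * stirling2 p (j + 1) + stirling2 p j := rfl
    rw [this]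
    ring

lemma alt_sum_choose (n j : ℕ) :
    ∑ k ∈ Finset.range (n + 1), (n.choose k : ℂ) * (-1) ^ k * (k.choose j : ℂ)
      = if j = n then (-1) ^ n else 0 := by
  rcases le_or_gt j n with hjn | hjn
  · have hsub : Finset.Ico j (n + 1) ⊆ Finset.range (n + 1) := by
      intro x hx; simp only [Finset.mem_Ico] at hx; simp [hx.2]
    rw [← Finset.sum_subset hsub (by
      intro x hx hx'
      simp only [Finset.mem_range] at hx
      simp only [Finset.mem_Ico, not_and, not_lt] at hx'
      have : x < j := by omega
      rw [Nat.choose_eq_zero_of_lt this]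
      simp)]
    rw [Finset.sum_Ico_eq_sum_range]
    have hterm : ∀ i ∈ Finset.range (n + 1 - j),
        (n.choose (j + i) : ℂ) * (-1) ^ (j + i) * ((j + i).choose j : ℂ)
          = ((n.choose j : ℂ) * (-1) ^ j) * ((-1) ^ i * ((n - j).choose i : ℂ)) := by
      intro i hi
      simp only [Finset.mem_range] at hi
      have hc : n.choose (j + i) * (j + i).choose j = n.choose j * (n - j).choose i := by
        have := Nat.choose_mul (n := n) (k := j + i) (s := j) (by omega)
        simpa using this
      have hc' : (n.choose (j + i) : ℂ) * ((j + i).choose j : ℂ) = (n.choose j : ℂ) * ((n - j).choose i : ℂ) := by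
        exact_mod_cast congrArg (Nat.cast : ℕ → ℂ) hc
      rw [pow_add]
      calc (n.choose (j + i) : ℂ) * ((-1) ^ j * (-1) ^ i) * ((j + i).choose j : ℂ)
          = ((n.choose (j + i) : ℂ) * ((j + i).choose j : ℂ)) * ((-1) ^ j * (-1) ^ i) := by ring
        _ = ((n.choose j : ℂ) * ((n - j).choose i : ℂ)) * ((-1) ^ j * (-1) ^ i) := by rw [hc']
        _ = _ := by ring
    rw [Finset.sum_congr rfl hterm, ← Finset.mul_sum]
    have halt : ∑ i ∈ Finset.range (n + 1 - j), ((-1 : ℂ) ^ i * ((n - j).choose i : ℂ))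
        = if n - j = 0 then 1 else 0 := by
      rw [show n + 1 - j = n - j + 1 by omega]
      have h := Int.alternating_sum_range_choose (n := n - j)
      have h2 : ((∑ m ∈ Finset.range (n - j + 1), ((-1) ^ m * (n - j).choose m : ℤ) : ℤ) : ℂ)
          = ((if n - j = 0 then (1 : ℤ) else 0 : ℤ) : ℂ) := by rw [h]
      push_cast at h2
      convert h2 using 2 <;> simp
    rw [halt]
    rcases eq_or_lt_of_le hjn with rfl | hlt
    · simp
    · rw [if_neg (by omega), if_neg (by omega), mul_zero]
  · have hz : ∀ k ∈ Finset.range (n + 1), (n.choose k : ℂ) * (-1) ^ k * (k.choose j : ℂ) = 0 := by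
      intro k hk
      simp only [Finset.mem_range] at hk
      rw [Nat.choose_eq_zero_of_lt (show k < j by omega)]
      simp
    rw [Finset.sum_congr rfl hz, Finset.sum_const_zero, if_neg (by omega)]

lemma alt_sum_pow (n p : ℕ) :
    ∑ k ∈ Finset.range (n + 1), (n.choose k : ℂ) * (-1) ^ k * (k : ℂ) ^ p
      = (-1) ^ n * (n ! : ℂ) * (stirling2 p n : ℂ) := by
  have hexp : ∀ k : ℕ, ((k : ℂ)) ^ p
      = ∑ j ∈ Finset.range (p + 1), (stirling2 p j : ℂ) * (j ! : ℂ) * (k.choose j : ℂ) := by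
    intro k
    have := pow_eq_sum_stirling k p
    exact_mod_cast congrArg (Nat.cast : ℕ → ℂ) this
  calc ∑ k ∈ Finset.range (n + 1), (n.choose k : ℂ) * (-1) ^ k * (k : ℂ) ^ p
      = ∑ k ∈ Finset.range (n + 1), ∑ j ∈ Finset.range (p + 1),
          (stirling2 p j : ℂ) * (j ! : ℂ) * ((n.choose k : ℂ) * (-1) ^ k * (k.choose j : ℂ)) := by
        refine Finset.sum_congr rfl fun k _ => ?_
        rw [hexp k, Finset.mul_sum]
        exact Finset.sum_congr rfl fun j _ => by ring
    _ = ∑ j ∈ Finset.range (p + 1), (stirling2 p j : ℂ) * (j ! : ℂ) *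
          (∑ k ∈ Finset.range (n + 1), (n.choose k : ℂ) * (-1) ^ k * (k.choose j : ℂ)) := by
        rw [Finset.sum_comm]
        exact Finset.sum_congr rfl fun j _ => by rw [Finset.mul_sum]
    _ = ∑ j ∈ Finset.range (p + 1), (stirling2 p j : ℂ) * (j ! : ℂ) *
          (if j = n then (-1 : ℂ) ^ n else 0) := by
        exact Finset.sum_congr rfl fun j _ => by rw [alt_sum_choose]
    _ = (-1) ^ n * (n ! : ℂ) * (stirling2 p n : ℂ) := by
        simp only [mul_ite, mul_zero]
        rw [Finset.sum_ite_eq' (Finset.range (p + 1)) n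
          (fun j => (stirling2 p j : ℂ) * (j ! : ℂ) * (-1) ^ n)]
        by_cases hnp : n ∈ Finset.range (p + 1)
        · rw [if_pos hnp]; ring
        · rw [if_neg hnp]
          rw [stirling2_eq_zero (by simp only [Finset.mem_range] at hnp; omega)]
          simp

theorem melzak_arbitrary_degree (n : ℕ) (hn : 0 < n) (M : ℕ) (f : Polynomial ℂ)
    (hf : f.natDegree ≤ M) (l : ℂ) (hl : ∀ k ∈ Finset.range (n + 1), l ≠ k) :
    ∑ k ∈ Finset.range (n + 1), (n.choose k : ℂ) * (-1) ^ k * f.eval (k : ℂ) / ((k : ℂ) - l) =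
      f.eval l * ∑ k ∈ Finset.range (n + 1), (n.choose k : ℂ) * (-1) ^ k / ((k : ℂ) - l) +
        (-1) ^ n * (n ! : ℂ) *
          ∑ m ∈ Finset.Icc (n + 1) M,
            f.coeff m * ∑ j ∈ Finset.range m, l ^ j * (stirling2 (m - j - 1) n : ℂ) := by
  have hne : ∀ k ∈ Finset.range (n + 1), (k : ℂ) - l ≠ 0 := by
    intro k hk h
    exact hl k hk (by linear_combination -h)
  have heval : ∀ x : ℂ, f.eval x = ∑ m ∈ Finset.range (M + 1), f.coeff m * x ^ m :=
    fun x => Polynomial.eval_eq_sum_range' (Nat.lt_succ_of_le hf) x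
  have key : ∑ k ∈ Finset.range (n + 1), (n.choose k : ℂ) * (-1) ^ k * f.eval (k : ℂ) / ((k : ℂ) - l)
      - f.eval l * ∑ k ∈ Finset.range (n + 1), (n.choose k : ℂ) * (-1) ^ k / ((k : ℂ) - l)
      = ∑ k ∈ Finset.range (n + 1), (n.choose k : ℂ) * (-1) ^ k *
          ∑ m ∈ Finset.range (M + 1), f.coeff m *
            ∑ j ∈ Finset.range m, l ^ j * (k : ℂ) ^ (m - 1 - j) := by
    rw [Finset.mul_sum, ← Finset.sum_sub_distrib]
    refine Finset.sum_congr rfl fun k hk => ?_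
    have hk' := hne k hk
    have hfact : f.eval (k : ℂ) - f.eval l
        = (∑ m ∈ Finset.range (M + 1), f.coeff m *
            ∑ j ∈ Finset.range m, l ^ j * (k : ℂ) ^ (m - 1 - j)) * ((k : ℂ) - l) := by
      rw [heval ((k : ℕ) : ℂ), heval l, ← Finset.sum_sub_distrib, Finset.sum_mul]
      refine Finset.sum_congr rfl fun m _ => ?_
      have hg := geom_sum₂_mul l ((k : ℕ) : ℂ) m
      linear_combination (f.coeff m) * hg
    rw [mul_div_assoc', div_sub_div_same, div_eq_iff hk']
    linear_combination (n.choose k : ℂ) * (-1) ^ k * hfact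
  have key2 : ∑ k ∈ Finset.range (n + 1), (n.choose k : ℂ) * (-1) ^ k *
        ∑ m ∈ Finset.range (M + 1), f.coeff m *
          ∑ j ∈ Finset.range m, l ^ j * (k : ℂ) ^ (m - 1 - j)
      = ∑ m ∈ Finset.range (M + 1), f.coeff m *
          ∑ j ∈ Finset.range m, l ^ j *
            ((-1) ^ n * (n ! : ℂ) * (stirling2 (m - 1 - j) n : ℂ)) := by
    have step1 : ∀ k ∈ Finset.range (n + 1), (n.choose k : ℂ) * (-1) ^ k *
          ∑ m ∈ Finset.range (M + 1), f.coeff m *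
            ∑ j ∈ Finset.range m, l ^ j * (k : ℂ) ^ (m - 1 - j)
        = ∑ m ∈ Finset.range (M + 1), ∑ j ∈ Finset.range m,
            f.coeff m * l ^ j * ((n.choose k : ℂ) * (-1) ^ k * (k : ℂ) ^ (m - 1 - j)) := by
      intro k _
      rw [Finset.mul_sum]
      refine Finset.sum_congr rfl fun m _ => ?_
      rw [Finset.mul_sum, Finset.mul_sum]
      exact Finset.sum_congr rfl fun j _ => by ring
    rw [Finset.sum_congr rfl step1, Finset.sum_comm]
    refine Finset.sum_congr rfl fun m _ => ?_
    rw [Finset.sum_comm, Finset.mul_sum]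
    refine Finset.sum_congr rfl fun j _ => ?_
    rw [← alt_sum_pow n (m - 1 - j), Finset.mul_sum, Finset.mul_sum]
    exact Finset.sum_congr rfl fun k _ => by ring
  have key3 : ∑ m ∈ Finset.range (M + 1), f.coeff m *
        ∑ j ∈ Finset.range m, l ^ j *
          ((-1) ^ n * (n ! : ℂ) * (stirling2 (m - 1 - j) n : ℂ))
      = (-1) ^ n * (n ! : ℂ) *
          ∑ m ∈ Finset.Icc (n + 1) M,
            f.coeff m * ∑ j ∈ Finset.range m, l ^ j * (stirling2 (m - j - 1) n : ℂ) := by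
    have hsub : Finset.Icc (n + 1) M ⊆ Finset.range (M + 1) := by
      intro m hm
      simp only [Finset.mem_Icc] at hm
      simp only [Finset.mem_range]
      omega
    have hz : ∀ m ∈ Finset.range (M + 1), m ∉ Finset.Icc (n + 1) M →
        f.coeff m * ∑ j ∈ Finset.range m, l ^ j *
          ((-1 : ℂ) ^ n * (n ! : ℂ) * (stirling2 (m - 1 - j) n : ℂ)) = 0 := by
      intro m hm hm'
      simp only [Finset.mem_range] at hm
      simp only [Finset.mem_Icc, not_and, not_le] at hm'
      have hmn : m ≤ n := by
        by_contra h
        exact absurd (by omega : m ≤ M) (Nat.lt_irrefl M ∘ fun h2 => absurd h2 (by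
          intro hmM
          exact absurd hmM (fun _ => (Nat.not_lt.mpr (hm' (by omega))) (by omega))))
      have hjz : ∀ j ∈ Finset.range m, l ^ j *
          ((-1 : ℂ) ^ n * (n ! : ℂ) * (stirling2 (m - 1 - j) n : ℂ)) = 0 := by
        intro j hj
        simp only [Finset.mem_range] at hj
        rw [stirling2_eq_zero (show m - 1 - j < n by omega)]
        simp
      rw [Finset.sum_congr rfl hjz, Finset.sum_const_zero, mul_zero]
    rw [← Finset.sum_subset hsub hz, Finset.mul_sum]
    refine Finset.sum_congr rfl fun m hm => ?_
    rw [Finset.mul_sum, Finset.mul_sum, Finset.mul_sum]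
    refine Finset.sum_congr rfl fun j hj => ?_
    rw [show m - 1 - j = m - j - 1 from by omega]
    ring
  have final := key.trans (key2.trans key3)
  linear_combination final
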